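/- Let P be a pmf on a finite set X, \rho > 0, G^* the optimal guessing function and L^* the optimal length function for the exponential cost. Then |(1/\rho)\log_2 E[G^*(X)^\rho] - (1/\rho)\log_2 E[2^{\rho L^*(X)}]| \le 1 + \log_2 c, where c = \sum_{i=1}^{|X|} 1/i. -/

import Mathlib

/-- The optimal guessing exponent is within `1 + log₂ c` of the optimal coding exponent:
`|ρ⁻¹ log₂ E[G*(X)^ρ] - ρ⁻¹ log₂ E[2^{ρ L*(X)}]| ≤ 1 + log₂ c`. -/
theorem optimal_guess_code_gap {α : Type*} [Fintype α] [Nonempty α]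
    (P : α → ℝ) (hP0 : ∀ x, 0 ≤ P x) (hP1 : ∑ x, P x = 1)
    (ρ : ℝ) (hρ : 0 < ρ)
    -- `Gstar` is an optimal guessing function: it minimizes `E[G(X)^ρ]` over bijections
    (Gstar : α → ℕ) (hGsinj : Function.Injective Gstar)
    (hGsrange : ∀ x, 1 ≤ Gstar x ∧ Gstar x ≤ Fintype.card α)
    (hGsOpt : ∀ G' : α → ℕ, Function.Injective G' →
      (∀ x, 1 ≤ G' x ∧ G' x ≤ Fintype.card α) →
      ∑ x, P x * (Gstar x : ℝ) ^ ρ ≤ ∑ x, P x * (G' x : ℝ) ^ ρ)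
    -- `Lstar` is an optimal length function: it minimizes `E[2^{ρ L(X)}]` subject to Kraft
    (Lstar : α → ℕ) (hKraftStar : ∑ x, (2 : ℝ) ^ (-(Lstar x : ℤ)) ≤ 1)
    (hLstarOpt : ∀ L' : α → ℕ, (∑ x, (2 : ℝ) ^ (-(L' x : ℤ)) ≤ 1) →
      ∑ x, P x * (2 : ℝ) ^ (ρ * (Lstar x : ℝ)) ≤ ∑ x, P x * (2 : ℝ) ^ (ρ * (L' x : ℝ)))
    (c : ℝ) (hc : c = ∑ i ∈ Finset.Icc 1 (Fintype.card α), (1 : ℝ) / i) :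
    |(1 / ρ) * Real.logb 2 (∑ x, P x * (Gstar x : ℝ) ^ ρ) -
      (1 / ρ) * Real.logb 2 (∑ x, P x * (2 : ℝ) ^ (ρ * (Lstar x : ℝ)))| ≤
      1 + Real.logb 2 c := by
  classical
  set n := Fintype.card α with hn
  set A := ∑ x, P x * (Gstar x : ℝ) ^ ρ with hA
  set B := ∑ x, P x * (2 : ℝ) ^ (ρ * (Lstar x : ℝ)) with hB
  have hA1 : 1 ≤ A := by
    calc (1:ℝ) = ∑ x, P x := hP1.symm
    _ ≤ A := by
        apply Finset.sum_le_sum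
        intro x _
        nth_rewrite 1 [← mul_one (P x)]
        apply mul_le_mul_of_nonneg_left _ (hP0 x)
        have h1 : (1:ℝ) ≤ (Gstar x : ℝ) := by exact_mod_cast (hGsrange x).1
        calc (1:ℝ) = 1 ^ ρ := (Real.one_rpow ρ).symm
        _ ≤ (Gstar x : ℝ) ^ ρ := Real.rpow_le_rpow zero_le_one h1 hρ.le
  have hB1 : 1 ≤ B := by
    calc (1:ℝ) = ∑ x, P x := hP1.symm
    _ ≤ B := by
        apply Finset.sum_le_sum
        intro x _
        nth_rewrite 1 [← mul_one (P x)]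
        apply mul_le_mul_of_nonneg_left _ (hP0 x)
        apply Real.one_le_rpow one_le_two
        positivity
  have hn1 : 1 ≤ n := Fintype.card_pos
  have hc1 : 1 ≤ c := by
    rw [hc]
    calc (1:ℝ) = ∑ i ∈ ({1} : Finset ℕ), (1:ℝ)/i := by simp
    _ ≤ _ := by
        apply Finset.sum_le_sum_of_subset_of_nonneg
        · simp [Finset.singleton_subset_iff, hn1]
        · intro i _ _; positivity
  have hc0 : 0 < c := lt_of_lt_of_le one_pos hc1
  -- image of Gstar is Icc 1 n
  have himg : Finset.univ.image Gstar = Finset.Icc 1 n := by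
    apply Finset.eq_of_subset_of_card_le
    · intro i hi
      simp only [Finset.mem_image] at hi
      obtain ⟨x, _, rfl⟩ := hi
      simp [Finset.mem_Icc, (hGsrange x).1, (hGsrange x).2]
    · rw [Finset.card_image_of_injective _ hGsinj]
      simp [Nat.card_Icc, hn]
  have hsumG : ∑ x : α, ((Gstar x : ℝ))⁻¹ = c := by
    rw [hc]
    rw [← himg, Finset.sum_image (fun x _ y _ h => hGsinj h)]
    simp [one_div]
  ----------------------------------------------------------------
  -- Step 1 : A ≤ B  (guess in order of Lstar)
  ----------------------------------------------------------------
  have hAB : A ≤ B := by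
    set e := Fintype.equivFin α with he
    set f : α → ℕ ×ₗ ℕ := fun x => toLex (Lstar x, (e x : ℕ)) with hf
    have hfinj : Function.Injective f := by
      intro x y h
      have h' : (Lstar x, ((e x : ℕ))) = (Lstar y, ((e y : ℕ))) := toLex.injective h
      exact e.injective (Fin.val_injective (congrArg Prod.snd h'))
    set G : α → ℕ := fun x => (Finset.univ.filter fun y => f y ≤ f x).card with hG
    have hmem : ∀ x, x ∈ Finset.univ.filter fun y => f y ≤ f x := by
      intro x; simp
    have hGmono : ∀ x y, f x < f y → G x < G y := by
      intro x y hxy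
      apply Finset.card_lt_card
      constructor
      · intro z hz
        simp only [Finset.mem_filter, Finset.mem_univ, true_and] at hz ⊢
        exact le_trans hz (le_of_lt hxy)
      · intro hsub
        have := hsub (hmem y)
        simp only [Finset.mem_filter, Finset.mem_univ, true_and] at this
        exact absurd (lt_of_le_of_lt this hxy) (lt_irrefl _)
    have hGinj : Function.Injective G := by
      intro x y h
      by_contra hne
      rcases lt_or_gt_of_ne (fun hfe => hne (hfinj hfe)) with h1 | h1
      · exact absurd h (hGmono x y h1).ne
      · exact absurd h.symm (hGmono y x h1).ne
    have hGrange : ∀ x, 1 ≤ G x ∧ G x ≤ n := by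
      intro x
      constructor
      · exact Finset.card_pos.mpr ⟨x, hmem x⟩
      · exact le_trans (Finset.card_le_card (Finset.filter_subset _ _)) (le_of_eq (by simp [hn]))
    -- G x ≤ 2 ^ Lstar x
    have hGle : ∀ x, (G x : ℝ) ≤ (2:ℝ) ^ (Lstar x : ℤ) := by
      intro x
      have key : (G x : ℝ) = ∑ y ∈ Finset.univ.filter fun y => f y ≤ f x, (1:ℝ) := by
        simp [hG]
      rw [key]
      have step : ∀ y ∈ Finset.univ.filter fun y => f y ≤ f x,
          (1:ℝ) ≤ (2:ℝ) ^ (Lstar x : ℤ) * (2:ℝ) ^ (-(Lstar y : ℤ)) := by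
        intro y hy
        simp only [Finset.mem_filter, Finset.mem_univ, true_and] at hy
        have hLle : Lstar y ≤ Lstar x := by
          rcases (Prod.Lex.le_iff).mp hy with h | h
          · exact h.le
          · exact le_of_eq h.1
        rw [← zpow_add₀ (two_ne_zero)]
        apply one_le_zpow₀ one_le_two
        omega
      calc ∑ y ∈ Finset.univ.filter fun y => f y ≤ f x, (1:ℝ)
          ≤ ∑ y ∈ Finset.univ.filter fun y => f y ≤ f x,
              (2:ℝ) ^ (Lstar x : ℤ) * (2:ℝ) ^ (-(Lstar y : ℤ)) := Finset.sum_le_sum step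
        _ ≤ ∑ y : α, (2:ℝ) ^ (Lstar x : ℤ) * (2:ℝ) ^ (-(Lstar y : ℤ)) := by
            apply Finset.sum_le_sum_of_subset_of_nonneg (Finset.filter_subset _ _)
            intro i _ _; positivity
        _ = (2:ℝ) ^ (Lstar x : ℤ) * ∑ y : α, (2:ℝ) ^ (-(Lstar y : ℤ)) := by
            rw [Finset.mul_sum]
        _ ≤ (2:ℝ) ^ (Lstar x : ℤ) * 1 := by
            apply mul_le_mul_of_nonneg_left hKraftStar (by positivity)
        _ = (2:ℝ) ^ (Lstar x : ℤ) := mul_one _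
    have h1 : A ≤ ∑ x, P x * (G x : ℝ) ^ ρ := hGsOpt G hGinj hGrange
    have h2 : ∑ x, P x * (G x : ℝ) ^ ρ ≤ B := by
      apply Finset.sum_le_sum
      intro x _
      apply mul_le_mul_of_nonneg_left _ (hP0 x)
      have hGx : (G x : ℝ) ≤ (2:ℝ) ^ (Lstar x : ℤ) := hGle x
      calc (G x : ℝ) ^ ρ ≤ ((2:ℝ) ^ (Lstar x : ℤ)) ^ ρ :=
            Real.rpow_le_rpow (Nat.cast_nonneg _) hGx hρ.le
        _ = (2:ℝ) ^ (ρ * (Lstar x : ℝ)) := by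
            have hc' : (((Lstar x : ℤ)) : ℝ) = (Lstar x : ℝ) := by push_cast; ring
            rw [← Real.rpow_intCast 2 (Lstar x : ℤ), hc', ← Real.rpow_mul (by norm_num),
              mul_comm]
    exact h1.trans h2
  ----------------------------------------------------------------
  -- Step 2 : B ≤ (2c)^ρ * A
  ----------------------------------------------------------------
  have hBA : B ≤ (2*c) ^ ρ * A := by
    set L : α → ℕ := fun x => (⌈Real.logb 2 (c * (Gstar x : ℝ))⌉).toNat with hL
    have hcx : ∀ x, (1:ℝ) ≤ c * (Gstar x : ℝ) := by
      intro x
      have h1 : (1:ℝ) ≤ (Gstar x : ℝ) := by exact_mod_cast (hGsrange x).1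
      nlinarith
    have hcx0 : ∀ x, (0:ℝ) < c * (Gstar x : ℝ) := fun x => lt_of_lt_of_le one_pos (hcx x)
    have hl0 : ∀ x, 0 ≤ Real.logb 2 (c * (Gstar x : ℝ)) := by
      intro x
      apply Real.logb_nonneg one_lt_two (hcx x)
    have hLcast : ∀ x, (L x : ℝ) = (⌈Real.logb 2 (c * (Gstar x : ℝ))⌉ : ℝ) := by
      intro x
      simp only [hL]
      exact_mod_cast congrArg (fun z : ℤ => (z : ℝ)) (Int.toNat_of_nonneg (Int.ceil_nonneg (hl0 x)))
    have hLlb : ∀ x, Real.logb 2 (c * (Gstar x : ℝ)) ≤ (L x : ℝ) := by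
      intro x; rw [hLcast x]; exact Int.le_ceil _
    have hLub : ∀ x, (L x : ℝ) ≤ Real.logb 2 (c * (Gstar x : ℝ)) + 1 := by
      intro x; rw [hLcast x]; exact (Int.ceil_lt_add_one _).le
    have hKraft : ∑ x, (2:ℝ) ^ (-(L x : ℤ)) ≤ 1 := by
      have hterm : ∀ x : α, (2:ℝ) ^ (-(L x : ℤ)) ≤ c⁻¹ * ((Gstar x : ℝ))⁻¹ := by
        intro x
        have h1 : (2:ℝ) ^ (-(L x : ℤ)) = (2:ℝ) ^ (-(L x : ℝ)) := by
          rw [← Real.rpow_intCast 2 (-(L x : ℤ))]; norm_num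
        have h3 : c⁻¹ * ((Gstar x : ℝ))⁻¹ = (2:ℝ) ^ (-Real.logb 2 (c * (Gstar x : ℝ))) := by
          rw [← mul_inv, Real.rpow_neg (by norm_num),
            Real.rpow_logb (by norm_num) (by norm_num) (hcx0 x)]
        rw [h1, h3]
        apply Real.rpow_le_rpow_of_exponent_le one_le_two
        linarith [hLlb x]
      calc ∑ x, (2:ℝ) ^ (-(L x : ℤ)) ≤ ∑ x, c⁻¹ * ((Gstar x : ℝ))⁻¹ :=
            Finset.sum_le_sum fun x _ => hterm x
        _ = c⁻¹ * ∑ x, ((Gstar x : ℝ))⁻¹ := by rw [Finset.mul_sum]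
        _ = 1 := by rw [hsumG, inv_mul_cancel₀ (ne_of_gt hc0)]
    have h1 : B ≤ ∑ x, P x * (2:ℝ) ^ (ρ * (L x : ℝ)) := hLstarOpt L hKraft
    have h2 : ∑ x, P x * (2:ℝ) ^ (ρ * (L x : ℝ)) ≤ (2*c) ^ ρ * A := by
      rw [hA, Finset.mul_sum]
      apply Finset.sum_le_sum
      intro x _
      rw [← mul_assoc, mul_comm ((2*c)^ρ) (P x), mul_assoc]
      apply mul_le_mul_of_nonneg_left _ (hP0 x)
      calc (2:ℝ) ^ (ρ * (L x : ℝ))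
          ≤ (2:ℝ) ^ (ρ * (Real.logb 2 (c * (Gstar x : ℝ)) + 1)) := by
            apply Real.rpow_le_rpow_of_exponent_le one_le_two
            exact mul_le_mul_of_nonneg_left (hLub x) hρ.le
        _ = ((2:ℝ) ^ (Real.logb 2 (c * (Gstar x : ℝ)) + 1)) ^ ρ := by
            rw [← Real.rpow_mul (by norm_num), mul_comm]
        _ = (c * (Gstar x : ℝ) * 2) ^ ρ := by
            rw [Real.rpow_add (by norm_num), Real.rpow_logb (by norm_num) (by norm_num) (hcx0 x)]
            norm_num
        _ = (2*c) ^ ρ * (Gstar x : ℝ) ^ ρ := by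
            rw [← Real.mul_rpow (by positivity) (Nat.cast_nonneg _)]
            ring_nf
    exact h1.trans h2
  ----------------------------------------------------------------
  -- Conclusion
  ----------------------------------------------------------------
  have hA0 : (0:ℝ) < A := lt_of_lt_of_le one_pos hA1
  have hB0 : (0:ℝ) < B := lt_of_lt_of_le one_pos hB1
  have hlogc : 0 ≤ Real.logb 2 c := Real.logb_nonneg one_lt_two hc1
  have hlogAB : Real.logb 2 A ≤ Real.logb 2 B := Real.logb_le_logb_of_le one_lt_two hA0 hAB
  have hlogBA : Real.logb 2 B ≤ ρ * (1 + Real.logb 2 c) + Real.logb 2 A := by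
    have h1 : Real.logb 2 B ≤ Real.logb 2 ((2*c)^ρ * A) :=
      Real.logb_le_logb_of_le one_lt_two hB0 hBA
    have h2 : Real.logb 2 ((2*c)^ρ * A) = ρ * Real.logb 2 (2*c) + Real.logb 2 A := by
      rw [Real.logb_mul (by positivity) (ne_of_gt hA0), Real.logb_rpow_eq_mul_logb_of_pos (by positivity)]
    have h3 : Real.logb 2 (2*c) = 1 + Real.logb 2 c := by
      rw [Real.logb_mul (by norm_num) (ne_of_gt hc0), Real.logb_self_eq_one one_lt_two]
    rw [h2, h3] at h1
    exact h1
  rw [abs_le]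
  constructor
  · rw [neg_le, ← sub_nonneg]
    have : (1/ρ) * Real.logb 2 B - (1/ρ) * Real.logb 2 A ≤ 1 + Real.logb 2 c := by
      rw [← mul_sub]
      rw [div_mul_eq_mul_div, one_mul, div_le_iff₀ hρ]
      nlinarith [hlogBA]
    linarith
  · have : (1/ρ) * Real.logb 2 A ≤ (1/ρ) * Real.logb 2 B := by
      apply mul_le_mul_of_nonneg_left hlogAB (by positivity)
    linarith
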